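/- Let s₁, ..., s_k > 0 be weights, b₁, ..., b_k ≥ 2 integers, φ > 1, with log₂ b_r ≤ s_r ≤ φ log₂ b_r for each r. Let u₁, ..., u_k be independent, u_r uniform on {1,...,b_r}. Then for ε ∈ (0,1): P( Σ_r s_r 𝟙{u_r = 1} ≥ (1−ε) Σ_r s_r ) ≤ 2^k · (∏_r b_r)^{−(1−ε)/φ}. -/

import Mathlib

open MeasureTheory ProbabilityTheory
open scoped ENNReal

/-- Exponential Chebyshev bound: with weights `log₂ b r ≤ s r ≤ φ log₂ b r`, `b r ≥ 2`,
`φ > 1`, and independent `u r` uniform on `{1, …, b r}`, for `ε ∈ (0,1)`: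
`P(Σ s_r 𝟙{u_r = 1} ≥ (1−ε) Σ s_r) ≤ 2^k (∏ b_r)^{−(1−ε)/φ}`. -/
theorem chebyshev_indicator_bound {Ω : Type*} [MeasurableSpace Ω]
    (μ : Measure Ω) [IsProbabilityMeasure μ]
    (k : ℕ) (b : Fin k → ℕ) (hb : ∀ r, 2 ≤ b r)
    (s : Fin k → ℝ) (hs : ∀ r, 0 < s r) (φ : ℝ) (hφ : 1 < φ)
    (hlog : ∀ r, Real.logb 2 (b r) ≤ s r ∧ s r ≤ φ * Real.logb 2 (b r))
    (u : Fin k → Ω → ℕ) (hmeas : ∀ r, Measurable (u r))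
    (hindep : iIndepFun u μ)
    (hrange : ∀ r ω, u r ω ∈ Finset.Icc 1 (b r))
    (hunif : ∀ r, ∀ j ∈ Finset.Icc 1 (b r), μ {ω | u r ω = j} = ((b r : ℝ≥0∞))⁻¹)
    (ε : ℝ) (hε0 : 0 < ε) (hε1 : ε < 1) :
    (μ {ω | (1 - ε) * ∑ r, s r ≤ ∑ r, s r * (if u r ω = 1 then (1 : ℝ) else 0)}).toReal
      ≤ 2 ^ k * (∏ r, (b r : ℝ)) ^ (-(1 - ε) / φ) := by
  set θ : ℝ := (1 - ε) / φ with hθ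
  have hφ0 : (0:ℝ) < φ := lt_trans one_pos hφ
  have hθ0 : 0 < θ := div_pos (by linarith) hφ0
  have hbr1 : ∀ r, (1:ℝ) < (b r : ℝ) := fun r => by
    have := hb r; exact_mod_cast lt_of_lt_of_le one_lt_two (by exact_mod_cast this)
  have hbr0 : ∀ r, (0:ℝ) < (b r : ℝ) := fun r => lt_trans one_pos (hbr1 r)
  have hprodpos : (0:ℝ) < ∏ r, (b r : ℝ) := Finset.prod_pos fun r _ => hbr0 r
  set M : ℝ := (∏ r, (b r : ℝ)) ^ θ with hM
  have hMpos : 0 < M := Real.rpow_pos_of_pos hprodpos θ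
  set 𝒯 : Finset (Finset (Fin k)) :=
    Finset.univ.filter (fun T => M ≤ ∏ r ∈ T, (b r : ℝ)) with h𝒯
  have hsub : {ω | (1 - ε) * ∑ r, s r ≤ ∑ r, s r * (if u r ω = 1 then (1 : ℝ) else 0)}
      ⊆ ⋃ T ∈ 𝒯, ⋂ r ∈ T, {ω | u r ω = 1} := by
    intro ω hω
    simp only [Set.mem_setOf_eq] at hω
    set T : Finset (Fin k) := Finset.univ.filter (fun r => u r ω = 1) with hT
    have hsumT : ∑ r ∈ T, s r = ∑ r, s r * (if u r ω = 1 then (1 : ℝ) else 0) := by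
      rw [hT, Finset.sum_filter]
      exact Finset.sum_congr rfl fun r _ => by split <;> simp
    have hmemT : T ∈ 𝒯 := by
      rw [h𝒯, Finset.mem_filter]
      refine ⟨Finset.mem_univ _, ?_⟩
      have h1 : θ * ∑ r, Real.logb 2 (b r) ≤ ∑ r ∈ T, Real.logb 2 (b r) := by
        have hA : (∑ r ∈ T, s r) / φ ≤ ∑ r ∈ T, Real.logb 2 (b r) := by
          rw [div_le_iff₀ hφ0, Finset.sum_mul]
          refine Finset.sum_le_sum fun r _ => ?_
          have h2 := (hlog r).2; rw [mul_comm]; linarith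
        have hB : (1 - ε) * ∑ r, s r ≤ ∑ r ∈ T, s r := by rw [hsumT]; exact hω
        have hC : ∑ r, Real.logb 2 (b r) ≤ ∑ r, s r :=
          Finset.sum_le_sum fun r _ => (hlog r).1
        calc θ * ∑ r, Real.logb 2 (b r) ≤ θ * ∑ r, s r :=
              mul_le_mul_of_nonneg_left hC hθ0.le
          _ = ((1 - ε) * ∑ r, s r) / φ := by rw [hθ]; ring
          _ ≤ (∑ r ∈ T, s r) / φ := by
              gcongr
          _ ≤ ∑ r ∈ T, Real.logb 2 (b r) := hA
      have hlog2 : (0:ℝ) < Real.log 2 := Real.log_pos one_lt_two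
      have h2 : θ * ∑ r, Real.log (b r) ≤ ∑ r ∈ T, Real.log (b r) := by
        have e1 : ∑ r, Real.logb 2 (b r) = (∑ r, Real.log (b r)) / Real.log 2 := by
          simp [Real.logb, Finset.sum_div]
        have e2 : ∑ r ∈ T, Real.logb 2 (b r)
            = (∑ r ∈ T, Real.log (b r)) / Real.log 2 := by
          simp [Real.logb, Finset.sum_div]
        rw [e1, e2] at h1
        have h3 := mul_le_mul_of_nonneg_right h1 hlog2.le
        rw [div_mul_cancel₀ _ hlog2.ne', mul_assoc, div_mul_cancel₀ _ hlog2.ne'] at h3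
        exact h3
      rw [hM]
      have hlogprod : Real.log (∏ r, (b r:ℝ)) = ∑ r, Real.log (b r) :=
        Real.log_prod fun r _ => (hbr0 r).ne'
      have hlogprodT : Real.log (∏ r ∈ T, (b r:ℝ)) = ∑ r ∈ T, Real.log (b r) :=
        Real.log_prod fun r _ => (hbr0 r).ne'
      have hTpos : (0:ℝ) < ∏ r ∈ T, (b r:ℝ) := Finset.prod_pos fun r _ => hbr0 r
      rw [Real.rpow_def_of_pos hprodpos]
      calc Real.exp (Real.log (∏ r, (b r:ℝ)) * θ)
          ≤ Real.exp (Real.log (∏ r ∈ T, (b r:ℝ))) := by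
            apply Real.exp_le_exp.mpr
            rw [hlogprod, hlogprodT, mul_comm]; exact h2
        _ = ∏ r ∈ T, (b r:ℝ) := Real.exp_log hTpos
    refine Set.mem_biUnion hmemT ?_
    simp only [Set.mem_iInter, Set.mem_setOf_eq]
    intro r hr
    rw [hT, Finset.mem_filter] at hr
    exact hr.2
  have hmeasT : ∀ T : Finset (Fin k), μ (⋂ r ∈ T, {ω | u r ω = 1})
      = ∏ r ∈ T, ((b r : ℝ≥0∞))⁻¹ := by
    intro T
    have h := hindep.meas_biInter (S := T) (s := fun r => {ω | u r ω = 1})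
      (fun r _ => ⟨{1}, MeasurableSet.singleton 1, rfl⟩)
    rw [h]
    exact Finset.prod_congr rfl fun r _ =>
      hunif r 1 (Finset.mem_Icc.mpr ⟨le_refl 1, le_trans one_le_two (hb r)⟩)
  have hterm : ∀ T ∈ 𝒯, μ (⋂ r ∈ T, {ω | u r ω = 1}) ≤ ENNReal.ofReal M⁻¹ := by
    intro T hT
    rw [hmeasT T]
    rw [h𝒯, Finset.mem_filter] at hT
    have h1 : ∏ r ∈ T, ((b r : ℝ≥0∞))⁻¹ = ENNReal.ofReal (∏ r ∈ T, (b r:ℝ))⁻¹ := by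
      rw [← Finset.prod_inv_distrib, ENNReal.ofReal_prod_of_nonneg
        (fun r _ => inv_nonneg.mpr (hbr0 r).le)]
      refine Finset.prod_congr rfl fun r _ => ?_
      rw [ENNReal.ofReal_inv_of_pos (hbr0 r), ENNReal.ofReal_natCast]
    rw [h1]
    exact ENNReal.ofReal_le_ofReal (inv_anti₀ hMpos hT.2)
  have hcard : (𝒯.card : ℝ≥0∞) ≤ 2 ^ k := by
    have h1 : 𝒯.card ≤ (Finset.univ : Finset (Finset (Fin k))).card :=
      Finset.card_filter_le _ _
    have h2 : (Finset.univ : Finset (Finset (Fin k))).card = 2 ^ k := by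
      rw [Finset.card_univ, Fintype.card_finset, Fintype.card_fin]
    calc (𝒯.card : ℝ≥0∞) ≤ ((2:ℕ) ^ k : ℕ) := by exact_mod_cast h1.trans_eq h2
      _ = 2 ^ k := by push_cast; ring
  have hmain : μ {ω | (1 - ε) * ∑ r, s r ≤ ∑ r, s r * (if u r ω = 1 then (1 : ℝ) else 0)}
      ≤ 2 ^ k * ENNReal.ofReal M⁻¹ := by
    calc μ _ ≤ μ (⋃ T ∈ 𝒯, ⋂ r ∈ T, {ω | u r ω = 1}) := measure_mono hsub
      _ ≤ ∑ T ∈ 𝒯, μ (⋂ r ∈ T, {ω | u r ω = 1}) := measure_biUnion_finset_le _ _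
      _ ≤ ∑ _T ∈ 𝒯, ENNReal.ofReal M⁻¹ := Finset.sum_le_sum hterm
      _ = 𝒯.card * ENNReal.ofReal M⁻¹ := by rw [Finset.sum_const, nsmul_eq_mul]
      _ ≤ 2 ^ k * ENNReal.ofReal M⁻¹ := mul_le_mul_left hcard _
  have hfin : (2:ℝ≥0∞) ^ k * ENNReal.ofReal M⁻¹ ≠ ⊤ :=
    ENNReal.mul_ne_top (by simp) ENNReal.ofReal_ne_top
  have htr := ENNReal.toReal_mono hfin hmain
  have hMinv : (∏ r, (b r : ℝ)) ^ (-(1 - ε) / φ) = M⁻¹ := by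
    rw [neg_div, ← hθ, Real.rpow_neg hprodpos.le, hM]
  have hrhs : ((2:ℝ≥0∞) ^ k * ENNReal.ofReal M⁻¹).toReal = 2 ^ k * M⁻¹ := by
    rw [ENNReal.toReal_mul, ENNReal.toReal_pow, ENNReal.toReal_ofReal
      (inv_nonneg.mpr hMpos.le), ENNReal.toReal_ofNat]
  rw [hrhs] at htr
  rw [hMinv]
  exact htr
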